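/- Let V be a real vector space of finite dimension n and ω : V × V → V* an alternating bilinear map. Write ω = ω₊ + ω₋ where ω₋(X,Y)(Z) = (1/3)(ω(X,Y)(Z) + ω(Y,Z)(X) + ω(Z,X)(Y)) is the totally alternating part and ω₊ = ω − ω₋. Define Θ(X,Y,W) ∈ End(V) by Θ(X,Y,W)Z = ω(X,Y)(W)Z + ω(X,Y)(Z)W + ω(Y,W)(X)Z + ω(Y,W)(Z)X + ω(W,X)(Y)Z + ω(W,X)(Z)Y. Then for all X,Y,Z ∈ V, Tr(W ↦ Θ(X,Y,W)Z) = (n−2)·ω₊(X,Y)(Z) + (n+1)·ω₋(X,Y)(Z). -/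

import Mathlib

open LinearMap Module

/-- For an alternating bilinear map `ω : V × V → V*`, the endomorphism-valued expression
`Θ(X,Y,W) : Z ↦ ω(X,Y)(W)Z + ω(X,Y)(Z)W + ω(Y,W)(X)Z + ω(Y,W)(Z)X + ω(W,X)(Y)Z + ω(W,X)(Z)Y`,
here bundled (for fixed `X, Y, Z`) as the linear map `W ↦ Θ(X,Y,W)Z`. -/
noncomputable def thetaMap {V : Type*} [AddCommGroup V] [Module ℝ V]
    (ω : V →ₗ[ℝ] V →ₗ[ℝ] (V →ₗ[ℝ] ℝ)) (X Y Z : V) : V →ₗ[ℝ] V :=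
  LinearMap.smulRight (ω X Y) Z
    + ω X Y Z • LinearMap.id
    + LinearMap.smulRight ((LinearMap.applyₗ X).comp (ω Y)) Z
    + LinearMap.smulRight ((LinearMap.applyₗ Z).comp (ω Y)) X
    + LinearMap.smulRight ((LinearMap.applyₗ Y).comp (ω.flip X)) Z
    + LinearMap.smulRight ((LinearMap.applyₗ Z).comp (ω.flip X)) Y

lemma trace_smulRight' {V : Type*} [AddCommGroup V] [Module ℝ V] [FiniteDimensional ℝ V]
    (f : V →ₗ[ℝ] ℝ) (v : V) :
    LinearMap.trace ℝ V (LinearMap.smulRight f v) = f v := by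
  have : LinearMap.smulRight f v = dualTensorHom ℝ V V (f ⊗ₜ v) := by
    ext w; simp
  rw [this, trace_eq_contract_apply]
  simp

/-- For `dim V = n` and an alternating `ω : V × V → V*` with totally alternating part
`ω₋(X,Y)(Z) = (1/3)(ω(X,Y)(Z) + ω(Y,Z)(X) + ω(Z,X)(Y))` and `ω₊ = ω − ω₋`, one has
`Tr(W ↦ Θ(X,Y,W)Z) = (n−2)·ω₊(X,Y)(Z) + (n+1)·ω₋(X,Y)(Z)`. -/
theorem theta_trace {V : Type*} [AddCommGroup V] [Module ℝ V] [FiniteDimensional ℝ V]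
    (n : ℕ) (hn : n = Module.finrank ℝ V)
    (ω : V →ₗ[ℝ] V →ₗ[ℝ] (V →ₗ[ℝ] ℝ))
    (halt : ∀ X : V, ω X X = 0) :
    ∀ X Y Z : V,
      LinearMap.trace ℝ V (thetaMap ω X Y Z) =
        ((n : ℝ) - 2) * (ω X Y Z - (1 / 3) * (ω X Y Z + ω Y Z X + ω Z X Y)) +
        ((n : ℝ) + 1) * ((1 / 3) * (ω X Y Z + ω Y Z X + ω Z X Y)) := by
  intro X Y Z
  have hskew : ω Y X Z = - ω X Y Z := by
    have h := halt (X + Y)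
    simp only [map_add, LinearMap.add_apply] at h
    rw [halt X, halt Y] at h
    have := congrArg (fun f => f Z) h
    simp only [LinearMap.add_apply, LinearMap.zero_apply, zero_add, add_zero] at this
    linarith
  simp only [thetaMap, map_add, trace_smulRight', map_smul, trace_id, smul_eq_mul,
    coe_comp, Function.comp_apply, flip_apply]
  rw [← hn]
  simp only [applyₗ_apply_apply, hskew]
  ring
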